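/- Let K₀ ⊆ H be a closed convex set containing 0 and G ∈ H, and let (u,p) solve the continuous Biot contact problem with admissible set K = G + K₀ and data (f_e, f_f). Then (‖u‖_H² + ‖p‖_Q²)^{1/2} ≤ ‖f_e‖_H + ‖f_f‖_Q + 3‖G‖_H. -/
import Mathlib


open scoped RealInnerProductSpace

/-- A priori estimate for the solution of the continuous Biot contact problem
with admissible set `K = G + K₀`, where `K₀` is closed, convex and contains `0`. -/
theorem stmt_4 {H Q : Type*}
    [NormedAddCommGroup H] [InnerProductSpace ℝ H] [CompleteSpace H]
    [NormedAddCommGroup Q] [InnerProductSpace ℝ Q] [CompleteSpace Q]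
    (B : H →L[ℝ] Q) (hB : ‖B‖ ≤ 1)
    (K₀ : Set H) (hK0 : (0 : H) ∈ K₀) (hK_cl : IsClosed K₀) (hK_cv : Convex ℝ K₀)
    (G : H) (f_e : H) (f_f : Q) (u : H) (p : Q)
    (hu : u ∈ (fun w => G + w) '' K₀)
    (hVI : ∀ v ∈ (fun w => G + w) '' K₀,
      ⟪u, v - u⟫ - ⟪p, B (v - u)⟫ ≥ ⟪f_e, v - u⟫)
    (hEq : ∀ q : Q, -⟪B u, q⟫ - ⟪p, q⟫ = ⟪f_f, q⟫) :
    Real.sqrt (‖u‖ ^ 2 + ‖p‖ ^ 2) ≤ ‖f_e‖ + ‖f_f‖ + 3 * ‖G‖ := by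
  have hG : G ∈ (fun w => G + w) '' K₀ := ⟨0, hK0, by simp⟩
  have h1 := hVI G hG
  have h2 := hEq p
  have hBG : ‖B G‖ ≤ ‖G‖ := by
    calc ‖B G‖ ≤ ‖B‖ * ‖G‖ := B.le_opNorm G
      _ ≤ 1 * ‖G‖ := mul_le_mul_of_nonneg_right hB (norm_nonneg G)
      _ = ‖G‖ := one_mul _
  have key : ‖u‖ ^ 2 + ‖p‖ ^ 2 ≤
      ‖u‖ * ‖G‖ + ‖p‖ * ‖G‖ + ‖f_e‖ * (‖G‖ + ‖u‖) + ‖f_f‖ * ‖p‖ := by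
    have e1 : ⟪u, G - u⟫ = ⟪u, G⟫ - ‖u‖ ^ 2 := by
      rw [inner_sub_right, real_inner_self_eq_norm_sq]
    have e2 : ⟪p, B (G - u)⟫ = ⟪p, B G⟫ - ⟪B u, p⟫ := by
      rw [map_sub, inner_sub_right, real_inner_comm p (B u)]
    have e4 : ⟪p, p⟫ = ‖p‖ ^ 2 := real_inner_self_eq_norm_sq p
    have b1 : ⟪u, G⟫ ≤ ‖u‖ * ‖G‖ := real_inner_le_norm u G
    have b2 : -⟪p, B G⟫ ≤ ‖p‖ * ‖G‖ := by
      have h := abs_real_inner_le_norm p (B G)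
      have h' : -⟪p, B G⟫ ≤ |⟪p, B G⟫| := neg_le_abs _
      nlinarith [norm_nonneg p]
    have b3 : -⟪f_e, G - u⟫ ≤ ‖f_e‖ * (‖G‖ + ‖u‖) := by
      have h := abs_real_inner_le_norm f_e (G - u)
      have h' : -⟪f_e, G - u⟫ ≤ |⟪f_e, G - u⟫| := neg_le_abs _
      have h'' : ‖G - u‖ ≤ ‖G‖ + ‖u‖ := norm_sub_le G u
      nlinarith [norm_nonneg f_e]
    have b4 : -⟪f_f, p⟫ ≤ ‖f_f‖ * ‖p‖ := by
      have h := abs_real_inner_le_norm f_f p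
      have h' : -⟪f_f, p⟫ ≤ |⟪f_f, p⟫| := neg_le_abs _
      linarith
    rw [e1, e2] at h1
    rw [e4] at h2
    linarith
  have hrhs : (0 : ℝ) ≤ ‖f_e‖ + ‖f_f‖ + 3 * ‖G‖ := by positivity
  set r := Real.sqrt (‖u‖ ^ 2 + ‖p‖ ^ 2) with hrdef
  have hr0 : 0 ≤ r := Real.sqrt_nonneg _
  have hr2 : r ^ 2 = ‖u‖ ^ 2 + ‖p‖ ^ 2 := Real.sq_sqrt (by positivity)
  have ha : ‖u‖ ≤ r := by
    have h := Real.sqrt_le_sqrt (show ‖u‖ ^ 2 ≤ ‖u‖ ^ 2 + ‖p‖ ^ 2 by nlinarith [sq_nonneg ‖p‖])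
    rwa [Real.sqrt_sq (norm_nonneg u)] at h
  have hb : ‖p‖ ≤ r := by
    have h := Real.sqrt_le_sqrt (show ‖p‖ ^ 2 ≤ ‖u‖ ^ 2 + ‖p‖ ^ 2 by nlinarith [sq_nonneg ‖u‖])
    rwa [Real.sqrt_sq (norm_nonneg p)] at h
  nlinarith [key, hr2, hr0, ha, hb, norm_nonneg u, norm_nonneg p, norm_nonneg G,
    norm_nonneg f_e, norm_nonneg f_f,
    mul_nonneg (norm_nonneg G) (sub_nonneg.2 ha), mul_nonneg (norm_nonneg G) (sub_nonneg.2 hb),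
    mul_nonneg (norm_nonneg f_e) (sub_nonneg.2 ha), mul_nonneg (norm_nonneg f_f) (sub_nonneg.2 hb),
    mul_nonneg hr0 (norm_nonneg G)]
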